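/- (Expected hitting time of the Laplacian walk, ε-approximate case.) Suppose f is ε-approximately k-smooth and strictly positive at every vertex. For the Markov chain with the Laplacian-walk Metropolis–Hastings transition matrix built from the modified proposal, started at any vertex i, the hitting time T_hit = inf{t ≥ 0 : f(X_t) = max_l f_l} of the function maximum satisfies E_i[T_hit] ≤ (M ‖f‖₂²)^r / (f_max² f_min^{2(r−1)}), where M = k + 2k√n ε + n ε², f_max = max_l f_l and f_min = min_l f_l. -/

import Mathlib

open scoped ENNReal in
open scoped Classical in
/-- For a Markov chain on a finite state space `V` with one-step transition matrix `P`
started at `i`, the probability (under the canonical path-space law `ℙ_i`) that the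
hitting time `T_A = inf{t ≥ 0 : X_t ∈ A}` exceeds `t`, i.e. the probability that the
first `t + 1` states of the chain all avoid `A`:
`ℙ_i[T_A > t] = ∑_{v_0 = i, v_0,…,v_t ∉ A} ∏_{l<t} P(v_l, v_{l+1})`. -/
noncomputable def survivalProb {V : Type*} [Fintype V] [DecidableEq V]
    (P : Matrix V V ℝ) (A : Set V) (i : V) (t : ℕ) : ℝ :=
  ∑ v ∈ Finset.univ.filter
      (fun v : Fin (t + 1) → V => v 0 = i ∧ ∀ l : Fin (t + 1), v l ∉ A),
    ∏ l : Fin t, P (v l.castSucc) (v l.succ)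

/-- The expected hitting time `E_i[T_A]` of the set `A` for the Markov chain with
transition matrix `P` started at `i`, computed (in `ℝ≥0∞`) via the layer-cake formula
`E_i[T_A] = ∑_{t ≥ 0} ℙ_i[T_A > t]` for the `ℕ`-valued random variable `T_A`. -/
noncomputable def expectedHittingTime {V : Type*} [Fintype V] [DecidableEq V]
    (P : Matrix V V ℝ) (A : Set V) (i : V) : ENNReal :=
  ∑' t : ℕ, ENNReal.ofReal (survivalProb P A i t)

/-- The local cumulative coherence of order `k` at node `i`: the Euclidean norm
`‖U_kᵀ δ_i‖₂`, where `δ_i` is the `i`-th standard basis vector of `ℝ^n`. -/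
noncomputable def localCoherence {n k : ℕ} (Uk : Matrix (Fin n) (Fin k) ℝ)
    (i : Fin n) : ℝ :=
  Real.sqrt (∑ l, (Uk.transpose.mulVec (Pi.single i 1) l) ^ 2)

open scoped Classical in
lemma surv_zero {V : Type*} [Fintype V] [DecidableEq V]
    (P : Matrix V V ℝ) (A : Set V) (i : V) :
    survivalProb P A i 0 = if i ∈ A then 0 else 1 := by
  rw [survivalProb]
  by_cases h : i ∈ A
  · rw [if_pos h]
    apply Finset.sum_eq_zero
    intro v hv
    rw [Finset.mem_filter] at hv
    exact ((hv.2.2 0) (hv.2.1 ▸ h)).elim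
  · rw [if_neg h]
    have hset : Finset.univ.filter
        (fun v : Fin 1 → V => v 0 = i ∧ ∀ l : Fin 1, v l ∉ A) = {fun _ => i} := by
      ext v
      simp only [Finset.mem_filter, Finset.mem_univ, true_and, Finset.mem_singleton]
      constructor
      · rintro ⟨h0, _⟩
        funext l
        rw [Subsingleton.elim l 0]
        exact h0
      · rintro rfl
        exact ⟨rfl, fun l => h⟩
    rw [hset]
    simp

open scoped Classical in
lemma surv_succ {V : Type*} [Fintype V] [DecidableEq V]
    (P : Matrix V V ℝ) (A : Set V) (i : V) (t : ℕ) :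
    survivalProb P A i (t + 1) =
      if i ∈ A then 0 else ∑ j, P i j * survivalProb P A j t := by
  rw [survivalProb, Finset.sum_filter]
  rw [← ((Fin.consEquiv (fun _ : Fin (t+2) => V))).sum_comp]
  rw [Fintype.sum_prod_type]
  have key : ∀ (x : V) (u : Fin (t+1) → V),
      (if ((Fin.cons x u : Fin (t+2) → V) 0 = i ∧
            ∀ l : Fin (t+2), (Fin.cons x u : Fin (t+2) → V) l ∉ A)
        then ∏ l : Fin (t+1), P ((Fin.cons x u : Fin (t+2) → V) l.castSucc)
            ((Fin.cons x u : Fin (t+2) → V) l.succ) else 0)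
      = (if x = i ∧ x ∉ A then 1 else 0) *
        (if (∀ l : Fin (t+1), u l ∉ A) then
          P x (u 0) * ∏ l : Fin t, P (u l.castSucc) (u l.succ) else 0) := by
    intro x u
    have hcond : ((Fin.cons x u : Fin (t+2) → V) 0 = i ∧
        ∀ l : Fin (t+2), (Fin.cons x u : Fin (t+2) → V) l ∉ A) ↔
        ((x = i ∧ x ∉ A) ∧ ∀ l : Fin (t+1), u l ∉ A) := by
      rw [Fin.forall_fin_succ]
      simp [Fin.cons_zero, Fin.cons_succ]
      tauto
    have hprod : (∏ l : Fin (t+1), P ((Fin.cons x u : Fin (t+2) → V) l.castSucc)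
        ((Fin.cons x u : Fin (t+2) → V) l.succ))
        = P x (u 0) * ∏ l : Fin t, P (u l.castSucc) (u l.succ) := by
      rw [Fin.prod_univ_succ]
      refine congrArg₂ (· * ·) ?_ (Finset.prod_congr rfl fun l _ => ?_)
      · simp
      · rw [← Fin.succ_castSucc]
        simp [Fin.cons_succ]
    rw [hprod, if_congr hcond rfl rfl]
    by_cases h1 : x = i ∧ x ∉ A <;>
      by_cases h2 : ∀ l : Fin (t+1), u l ∉ A <;> simp [h1, h2]
  simp only [Fin.consEquiv_apply]
  simp only [key]
  rw [Finset.sum_eq_single i]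
  · by_cases h : i ∈ A
    · simp [h]
    · simp only [if_pos (⟨rfl, h⟩ : i = i ∧ i ∉ A), one_mul, if_neg h]
      have hrhs : ∀ j : V, P i j * survivalProb P A j t =
          ∑ u : Fin (t+1) → V, (if u 0 = j ∧ ∀ l : Fin (t+1), u l ∉ A then
            P i j * ∏ l : Fin t, P (u l.castSucc) (u l.succ) else 0) := by
        intro j
        rw [survivalProb, Finset.sum_filter, Finset.mul_sum]
        apply Finset.sum_congr rfl
        intro u _
        by_cases hc : u 0 = j ∧ ∀ l : Fin (t+1), u l ∉ A <;> simp [hc]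
      simp only [hrhs]
      rw [Finset.sum_comm]
      apply Finset.sum_congr rfl
      intro u _
      rw [Finset.sum_eq_single (u 0)]
      · by_cases hc : ∀ l : Fin (t+1), u l ∉ A <;> simp [hc, h]
      · intro b _ hb
        have hnc : ¬ (u 0 = b ∧ ∀ l : Fin (t+1), u l ∉ A) := fun hh => hb hh.1.symm
        simp [hnc]
      · simp
  · intro b _ hb
    simp [hb]
  · simp

lemma geom_aux (B a C : ℝ) (hB : 0 ≤ B) (ha : 0 ≤ a) (hBC : B + a ≤ C) :
    ∀ r : ℕ, ∑ t ∈ Finset.range r, B ^ (r - t) * a ^ t ≤ C ^ r := by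
  have hC : 0 ≤ C := le_trans (by linarith) hBC
  have hBC' : B ≤ C := by linarith
  intro r
  induction r with
  | zero => simp
  | succ r ih =>
    rw [Finset.sum_range_succ']
    have h1 : ∀ t ∈ Finset.range r, B ^ (r + 1 - (t + 1)) * a ^ (t + 1)
        = a * (B ^ (r - t) * a ^ t) := by
      intro t _
      rw [Nat.succ_sub_succ]
      ring
    rw [Finset.sum_congr rfl h1]
    have h2 : ∑ t ∈ Finset.range r, a * (B ^ (r - t) * a ^ t) ≤ a * C ^ r := by
      rw [← Finset.mul_sum]
      exact mul_le_mul_of_nonneg_left ih ha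
    have h3 : B ^ (r + 1 - 0) * a ^ 0 ≤ B * C ^ r := by
      simp only [Nat.sub_zero, pow_zero, mul_one, pow_succ]
      calc B ^ r * B ≤ C ^ r * B := by
            exact mul_le_mul_of_nonneg_right (pow_le_pow_left₀ hB hBC' r) hB
        _ = B * C ^ r := by ring
    calc ∑ t ∈ Finset.range r, a * (B ^ (r - t) * a ^ t) + B ^ (r + 1 - 0) * a ^ 0
        ≤ a * C ^ r + B * C ^ r := add_le_add h2 h3
      _ ≤ C * C ^ r := by
          have h4 := mul_le_mul_of_nonneg_right hBC (pow_nonneg hC r)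
          have h5 : (B + a) * C ^ r = a * C ^ r + B * C ^ r := by ring
          linarith
      _ = C ^ (r + 1) := by ring

set_option maxHeartbeats 2000000 in
/-- Expected hitting time of the Laplacian walk, `ε`-approximate case:
suppose `f` is `ε`-approximately `k`-smooth and strictly positive at every vertex.  For
the Markov chain with the Laplacian-walk Metropolis–Hastings transition matrix built
from the modified proposal, started at any vertex `i`, the hitting time
`T_hit = inf{t ≥ 0 : f(X_t) = max_l f l}` of the function maximum satisfies
`E_i[T_hit] ≤ (M ‖f‖₂²)^r / (f_max² f_min^{2(r−1)})`, where `M = k + 2k√n ε + n ε²`. -/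
theorem laplacian_walk_expected_hitting_time_approx_ksmooth
    {n : ℕ} (hn : 2 ≤ n)
    (W : Matrix (Fin n) (Fin n) ℝ)
    (hWsymm : ∀ i j, W i j = W j i)
    (hW01 : ∀ i j, W i j = 0 ∨ W i j = 1)
    (hWdiag : ∀ i, W i i = 0)
    (hdegpos : ∀ i, 0 < ∑ j, W i j)
    (r : ℕ) (hr1 : 1 ≤ r)
    (hWconn : ∀ i j : Fin n, ∃ v : Fin (r + 1) → Fin n,
      v 0 = i ∧ v (Fin.last r) = j ∧ ∀ l : Fin r, W (v l.castSucc) (v l.succ) = 1)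
    {k : ℕ} (hk1 : 1 ≤ k) (hkn : k ≤ n)
    (Uk : Matrix (Fin n) (Fin k) ℝ)
    (hU : Uk.transpose * Uk = 1)
    (f : Fin n → ℝ) (ε : ℝ) (hε : 0 < ε)
    (fks : Fin n → ℝ) (hfks : fks = Uk.mulVec (Uk.transpose.mulVec f))
    (happrox : ∀ i, |f i - fks i| ≤ ε * Real.sqrt (∑ j, fks j ^ 2))
    (hfpos : ∀ i, 0 < f i)
    (pf : Fin n → ℝ) (hpf : ∀ i, pf i = f i ^ 2 / ∑ j, f j ^ 2)
    (Q' : Matrix (Fin n) (Fin n) ℝ)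
    (hQ' : ∀ i j, Q' i j =
      W i j * (localCoherence Uk j + ε) ^ 2 / ∑ l, W i l * (localCoherence Uk l + ε) ^ 2)
    (P : Matrix (Fin n) (Fin n) ℝ)
    (hP1 : ∀ i j, j ≠ i → W i j = 1 →
      P i j = Q' i j * min 1 ((pf j * Q' j i) / (pf i * Q' i j)))
    (hP0 : ∀ i j, j ≠ i → W i j = 0 → P i j = 0)
    (hPdiag : ∀ i, P i i = 1 - ∑ j ∈ Finset.univ.erase i, P i j)
    (fmax fmin : ℝ)
    (hfmax : IsGreatest (Set.range f) fmax) (hfmin : IsLeast (Set.range f) fmin)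
    (i : Fin n) :
    expectedHittingTime P {j | f j = fmax} i ≤
      ENNReal.ofReal ((((k : ℝ) + 2 * k * Real.sqrt n * ε + n * ε ^ 2) * ∑ j, f j ^ 2) ^ r /
        (fmax ^ 2 * fmin ^ (2 * (r - 1)))) := by
  classical
  obtain ⟨jM, hjM⟩ := hfmax.1
  obtain ⟨jm, hjm⟩ := hfmin.1
  have hfmax_ge : ∀ j, f j ≤ fmax := fun j => hfmax.2 ⟨j, rfl⟩
  have hfmin_le : ∀ j, fmin ≤ f j := fun j => hfmin.2 ⟨j, rfl⟩
  have hfminpos : 0 < fmin := hjm ▸ hfpos jm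
  have hfmaxpos : 0 < fmax := hjM ▸ hfpos jM
  set A : Set (Fin n) := {j | f j = fmax} with hA
  set G : ℝ := ∑ j, f j ^ 2 with hG
  set M : ℝ := (k:ℝ) + 2 * k * Real.sqrt n * ε + n * ε ^ 2 with hM
  set a : ℝ := fmin ^ 2 with ha
  set C : ℝ := M * G with hC
  set B : ℝ := C - a with hB
  have hapos : 0 < a := by rw [ha]; exact pow_pos hfminpos 2
  have hM1 : 1 ≤ M := by
    have h1 : (1:ℝ) ≤ (k:ℝ) := by exact_mod_cast hk1
    have h2 : 0 ≤ 2 * (k:ℝ) * Real.sqrt n * ε := by positivity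
    have h3 : 0 ≤ (n:ℝ) * ε ^ 2 := by positivity
    rw [hM]; linarith
  have hG2a : 2 * a ≤ G := by
    have h1 : ∀ j, a ≤ f j ^ 2 := fun j => by
      rw [ha]; exact pow_le_pow_left₀ hfminpos.le (hfmin_le j) 2
    have h2 : (Finset.univ : Finset (Fin n)).card • a ≤ G := by
      rw [hG]; exact Finset.card_nsmul_le_sum _ _ _ (fun j _ => h1 j)
    rw [Finset.card_univ, Fintype.card_fin, nsmul_eq_mul] at h2
    have hn' : (2:ℝ) ≤ (n:ℝ) := by exact_mod_cast hn
    have h3 := mul_le_mul_of_nonneg_right hn' hapos.le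
    linarith
  have hGpos : 0 < G := by
    rw [hG]
    exact Finset.sum_pos (fun j _ => pow_pos (hfpos j) 2) ⟨jm, Finset.mem_univ jm⟩
  have hCpos : 0 < C := by
    rw [hC]; exact mul_pos (lt_of_lt_of_le one_pos hM1) hGpos
  have hGC : G ≤ C := by rw [hC]; exact le_mul_of_one_le_left hGpos.le hM1
  have hBpos : 0 < B := by rw [hB]; linarith
  have hBC : B + a ≤ C := by rw [hB]; linarith
  -- coherence facts
  have hcoh_eq : ∀ j, localCoherence Uk j = Real.sqrt (∑ l, Uk j l ^ 2) := by
    intro j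
    rw [localCoherence]
    congr 1
    apply Finset.sum_congr rfl
    intro l _
    rw [Matrix.mulVec_single]
    simp [Matrix.transpose_apply]
  have hcoh_nonneg : ∀ j, 0 ≤ localCoherence Uk j :=
    fun j => Real.sqrt_nonneg _
  have hcoh_sq : ∀ j, localCoherence Uk j ^ 2 = ∑ l, Uk j l ^ 2 := by
    intro j
    rw [hcoh_eq j]
    exact Real.sq_sqrt (by positivity)
  have hsum_cohsq : ∑ j, localCoherence Uk j ^ 2 = (k:ℝ) := by
    calc ∑ j, localCoherence Uk j ^ 2 = ∑ j, ∑ l, Uk j l ^ 2 :=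
          Finset.sum_congr rfl fun j _ => hcoh_sq j
      _ = ∑ l, ∑ j, Uk j l ^ 2 := Finset.sum_comm
      _ = ∑ l : Fin k, (Uk.transpose * Uk) l l := by
          apply Finset.sum_congr rfl
          intro l _
          rw [Matrix.mul_apply]
          apply Finset.sum_congr rfl
          intro j _
          rw [Matrix.transpose_apply, sq]
      _ = ∑ l : Fin k, (1 : Matrix (Fin k) (Fin k) ℝ) l l := by rw [hU]
      _ = (k:ℝ) := by simp [Matrix.one_apply_eq]
  have hsum_coh : ∑ j, localCoherence Uk j ≤ (k:ℝ) * Real.sqrt n := by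
    have hcs := Finset.sum_mul_sq_le_sq_mul_sq Finset.univ
      (fun j => localCoherence Uk j) (fun _ => (1:ℝ))
    simp only [mul_one, one_pow, Finset.sum_const, Finset.card_univ,
      Fintype.card_fin, nsmul_eq_mul, hsum_cohsq] at hcs
    have h0 : 0 ≤ ∑ j, localCoherence Uk j :=
      Finset.sum_nonneg fun j _ => hcoh_nonneg j
    have h1 : ∑ j, localCoherence Uk j ≤ Real.sqrt ((k:ℝ) * n) := by
      rw [← Real.sqrt_sq h0]
      exact Real.sqrt_le_sqrt hcs
    have h2 : Real.sqrt ((k:ℝ) * n) = Real.sqrt k * Real.sqrt n := by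
      rw [Real.sqrt_mul (by positivity)]
    have h3 : Real.sqrt (k:ℝ) ≤ (k:ℝ) := by
      have hk' : (1:ℝ) ≤ (k:ℝ) := by exact_mod_cast hk1
      have h31 : 1 ≤ Real.sqrt (k:ℝ) := by
        rw [show (1:ℝ) = Real.sqrt 1 from (Real.sqrt_one).symm]
        exact Real.sqrt_le_sqrt hk'
      calc Real.sqrt (k:ℝ) ≤ Real.sqrt (k:ℝ) * Real.sqrt (k:ℝ) :=
            le_mul_of_one_le_left (Real.sqrt_nonneg _) h31
        _ = (k:ℝ) := Real.mul_self_sqrt (by positivity)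
    calc ∑ j, localCoherence Uk j ≤ Real.sqrt k * Real.sqrt n := h2 ▸ h1
      _ ≤ (k:ℝ) * Real.sqrt n :=
          mul_le_mul_of_nonneg_right h3 (Real.sqrt_nonneg _)
  have hM'' : ∑ j, (localCoherence Uk j + ε) ^ 2 ≤ M := by
    have hexp : ∀ j, (localCoherence Uk j + ε) ^ 2
        = localCoherence Uk j ^ 2 + 2 * ε * localCoherence Uk j + ε ^ 2 :=
      fun j => by ring
    rw [Finset.sum_congr rfl fun j _ => hexp j]
    rw [Finset.sum_add_distrib, Finset.sum_add_distrib, ← Finset.mul_sum,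
      hsum_cohsq, Finset.sum_const, Finset.card_univ, Fintype.card_fin,
      nsmul_eq_mul]
    have := mul_le_mul_of_nonneg_left hsum_coh (by positivity : (0:ℝ) ≤ 2 * ε)
    rw [hM]; linarith
  -- fks facts
  set F : ℝ := ∑ j, fks j ^ 2 with hF
  have hFnonneg : 0 ≤ F := by rw [hF]; positivity
  have hgF : ∑ l, (Uk.transpose.mulVec f) l ^ 2 = F := by
    have h1 : F = dotProduct fks fks := by
      rw [hF, dotProduct]
      exact Finset.sum_congr rfl fun j _ => pow_two (fks j)
    have h2 : dotProduct fks fks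
        = dotProduct (Uk.transpose.mulVec f) (Uk.transpose.mulVec f) := by
      nth_rewrite 2 [hfks]
      rw [Matrix.dotProduct_mulVec]
      have h3 : Matrix.vecMul fks Uk = Uk.transpose.mulVec fks := by
        rw [← Matrix.vecMul_transpose, Matrix.transpose_transpose]
      rw [h3, hfks, Matrix.mulVec_mulVec, hU, Matrix.one_mulVec]
    rw [h1, h2, dotProduct]
    exact Finset.sum_congr rfl fun l _ => pow_two _
  have hFpos : 0 < F := by
    rcases lt_or_eq_of_le hFnonneg with h | h
    · exact h
    · exfalso
      have hz : ∀ j, fks j = 0 := by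
        intro j
        have h0 := (Finset.sum_eq_zero_iff_of_nonneg
          (fun j _ => sq_nonneg (fks j))).mp (hF ▸ h.symm) j (Finset.mem_univ j)
        exact sq_eq_zero_iff.mp h0
      have h1 := happrox jm
      rw [hz jm, sub_zero, ← h, Real.sqrt_zero, mul_zero] at h1
      have := hfpos jm
      rw [abs_of_pos this] at h1
      linarith
  have hfks_bound : ∀ j, fks j ≤ localCoherence Uk j * Real.sqrt F := by
    intro j
    have hfj : fks j = ∑ l, Uk j l * (Uk.transpose.mulVec f) l := by
      rw [hfks]; rfl
    have hcs := Finset.sum_mul_sq_le_sq_mul_sq Finset.univ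
      (fun l => Uk j l) (fun l => (Uk.transpose.mulVec f) l)
    rw [hgF] at hcs
    calc fks j ≤ |fks j| := le_abs_self _
      _ = Real.sqrt (fks j ^ 2) := (Real.sqrt_sq_eq_abs _).symm
      _ ≤ Real.sqrt ((∑ l, Uk j l ^ 2) * F) := by
          apply Real.sqrt_le_sqrt
          rw [hfj]
          exact hcs
      _ = Real.sqrt (∑ l, Uk j l ^ 2) * Real.sqrt F :=
          Real.sqrt_mul (by positivity) _
      _ = localCoherence Uk j * Real.sqrt F := by rw [hcoh_eq j]
  have hf_bound : ∀ j, f j ≤ (localCoherence Uk j + ε) * Real.sqrt F := by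
    intro j
    have h1 : f j - fks j ≤ ε * Real.sqrt F :=
      le_trans (le_abs_self _) (happrox j)
    have h2 := hfks_bound j
    have h3 : (localCoherence Uk j + ε) * Real.sqrt F
        = localCoherence Uk j * Real.sqrt F + ε * Real.sqrt F := by ring
    linarith
  have hf_sq_bound : ∀ j, f j ^ 2 ≤ (localCoherence Uk j + ε) ^ 2 * F := by
    intro j
    have h1 := hf_bound j
    have h2 : 0 ≤ f j := (hfpos j).le
    calc f j ^ 2 ≤ ((localCoherence Uk j + ε) * Real.sqrt F) ^ 2 :=
          pow_le_pow_left₀ h2 h1 2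
      _ = (localCoherence Uk j + ε) ^ 2 * Real.sqrt F ^ 2 := by ring
      _ = (localCoherence Uk j + ε) ^ 2 * F := by rw [Real.sq_sqrt hFnonneg]
  have hF_le_G : F ≤ G := by
    have hffks : ∑ j, f j * fks j = F := by
      have h1 : ∑ j, f j * fks j = dotProduct f fks := rfl
      rw [h1]
      nth_rewrite 1 [hfks]
      rw [Matrix.dotProduct_mulVec]
      have h3 : Matrix.vecMul f Uk = Uk.transpose.mulVec f := by
        rw [← Matrix.vecMul_transpose, Matrix.transpose_transpose]
      rw [h3]
      rw [← hgF, dotProduct]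
      exact Finset.sum_congr rfl fun l _ => (pow_two _).symm
    have hcs := Finset.sum_mul_sq_le_sq_mul_sq Finset.univ
      (fun j => f j) (fun j => fks j)
    rw [hffks] at hcs
    rw [← hG, ← hF, pow_two] at hcs
    exact le_of_mul_le_mul_right hcs hFpos
  -- proposal facts
  set D : Fin n → ℝ := fun i => ∑ l, W i l * (localCoherence Uk l + ε) ^ 2 with hD
  have hW_nonneg : ∀ i j, 0 ≤ W i j := by
    intro i0 j
    rcases hW01 i0 j with h | h <;> rw [h] <;> norm_num
  have hQ'D : ∀ i j, Q' i j = W i j * (localCoherence Uk j + ε) ^ 2 / D i :=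
    fun i0 j => hQ' i0 j
  have hD_pos : ∀ i, 0 < D i := by
    intro i0
    obtain ⟨l0, hl0⟩ : ∃ l, W i0 l = 1 := by
      by_contra h
      push_neg at h
      have h0 : ∀ l, W i0 l = 0 := fun l => (hW01 i0 l).resolve_right (h l)
      have := hdegpos i0
      rw [Finset.sum_congr rfl fun l _ => h0 l, Finset.sum_const, smul_zero] at this
      exact lt_irrefl 0 this
    have h1 : W i0 l0 * (localCoherence Uk l0 + ε) ^ 2 ≤ D i0 :=
      Finset.single_le_sum
        (f := fun l => W i0 l * (localCoherence Uk l + ε) ^ 2)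
        (fun l _ => mul_nonneg (hW_nonneg i0 l) (sq_nonneg _)) (Finset.mem_univ l0)
    have h2 : 0 < (localCoherence Uk l0 + ε) ^ 2 := by
      have := hcoh_nonneg l0
      positivity
    rw [hl0, one_mul] at h1
    linarith
  have hFD_le_B : ∀ i, F * D i ≤ B := by
    intro i0
    have h1 : D i0 ≤ (∑ l, (localCoherence Uk l + ε) ^ 2) - (localCoherence Uk i0 + ε) ^ 2 := by
      have e1 : D i0 = ∑ l ∈ Finset.univ.erase i0, W i0 l * (localCoherence Uk l + ε) ^ 2 := by
        simp only [hD]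
        rw [← Finset.sum_erase_add Finset.univ _ (Finset.mem_univ i0),
          hWdiag i0, zero_mul, add_zero]
      have e2 : ∑ l ∈ Finset.univ.erase i0, W i0 l * (localCoherence Uk l + ε) ^ 2
          ≤ ∑ l ∈ Finset.univ.erase i0, (localCoherence Uk l + ε) ^ 2 := by
        apply Finset.sum_le_sum
        intro l _
        rcases hW01 i0 l with h | h <;> rw [h]
        · rw [zero_mul]; exact sq_nonneg _
        · rw [one_mul]
      have e3 : ∑ l ∈ Finset.univ.erase i0, (localCoherence Uk l + ε) ^ 2
          = (∑ l, (localCoherence Uk l + ε) ^ 2) - (localCoherence Uk i0 + ε) ^ 2 := by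
        rw [Finset.sum_erase_eq_sub (Finset.mem_univ i0)]
      rw [e1]; rw [e3] at e2; exact e2
    have h2 : F * D i0 ≤ F * (∑ l, (localCoherence Uk l + ε) ^ 2)
        - F * (localCoherence Uk i0 + ε) ^ 2 := by
      have h2a := mul_le_mul_of_nonneg_left h1 hFnonneg
      rw [mul_sub] at h2a
      exact h2a
    have h3 : F * (∑ l, (localCoherence Uk l + ε) ^ 2) ≤ G * M := by
      have hs : 0 ≤ ∑ l, (localCoherence Uk l + ε) ^ 2 :=
        Finset.sum_nonneg fun l _ => sq_nonneg _
      exact mul_le_mul hF_le_G hM'' hs (le_trans hFnonneg hF_le_G)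
    have h4 : f i0 ^ 2 ≤ F * (localCoherence Uk i0 + ε) ^ 2 := by
      rw [mul_comm]; exact hf_sq_bound i0
    have h5 : a ≤ f i0 ^ 2 := by
      rw [ha]; exact pow_le_pow_left₀ hfminpos.le (hfmin_le i0) 2
    rw [hB, hC]
    linarith
  have hQ_lb : ∀ i j, W i j = 1 → f j ^ 2 / B ≤ Q' i j := by
    intro i0 j hW1
    rw [hQ'D, hW1, one_mul]
    have h1 : f j ^ 2 / F ≤ (localCoherence Uk j + ε) ^ 2 :=
      (div_le_iff₀ hFpos).mpr (hf_sq_bound j)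
    calc f j ^ 2 / B ≤ f j ^ 2 / (F * D i0) := by
          apply div_le_div_of_nonneg_left (sq_nonneg _) _ (hFD_le_B i0)
          exact mul_pos hFpos (hD_pos i0)
      _ = (f j ^ 2 / F) / D i0 := by rw [div_div]
      _ ≤ (localCoherence Uk j + ε) ^ 2 / D i0 :=
          div_le_div_of_nonneg_right h1 (hD_pos i0).le
  have hQ_nonneg : ∀ i j, 0 ≤ Q' i j := by
    intro i0 j
    rw [hQ'D]
    exact div_nonneg (mul_nonneg (hW_nonneg i0 j) (sq_nonneg _)) (hD_pos i0).le
  have hpf_pos : ∀ x, 0 < pf x := by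
    intro x
    rw [hpf]
    exact div_pos (pow_pos (hfpos x) 2) hGpos
  have hQ_le : ∀ i j, j ≠ i → P i j ≤ Q' i j := by
    intro i0 j hne
    rcases hW01 i0 j with h | h
    · rw [hP0 i0 j hne h]; exact hQ_nonneg i0 j
    · rw [hP1 i0 j hne h]
      calc Q' i0 j * min 1 (pf j * Q' j i0 / (pf i0 * Q' i0 j))
          ≤ Q' i0 j * 1 :=
            mul_le_mul_of_nonneg_left (min_le_left _ _) (hQ_nonneg i0 j)
        _ = Q' i0 j := mul_one _
  have hQsum : ∀ i0, ∑ j ∈ Finset.univ.erase i0, Q' i0 j = 1 := by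
    intro i0
    have h1 : ∑ j ∈ Finset.univ.erase i0, Q' i0 j
        = (∑ j ∈ Finset.univ.erase i0, W i0 j * (localCoherence Uk j + ε) ^ 2) / D i0 := by
      rw [Finset.sum_div]
      exact Finset.sum_congr rfl fun j _ => hQ'D i0 j
    have h2 : ∑ j ∈ Finset.univ.erase i0, W i0 j * (localCoherence Uk j + ε) ^ 2 = D i0 := by
      simp only [hD]
      rw [← Finset.sum_erase_add Finset.univ _ (Finset.mem_univ i0),
        hWdiag i0, zero_mul, add_zero]
    rw [h1, h2, div_self (hD_pos i0).ne']
  have hP_nonneg : ∀ i j, 0 ≤ P i j := by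
    intro i0 j
    by_cases hne : j = i0
    · subst hne
      rw [hPdiag]
      have h1 : ∑ x ∈ Finset.univ.erase j, P j x ≤ ∑ x ∈ Finset.univ.erase j, Q' j x :=
        Finset.sum_le_sum fun x hx => hQ_le j x (Finset.ne_of_mem_erase hx)
      rw [hQsum j] at h1
      linarith
    · rcases hW01 i0 j with h | h
      · rw [hP0 i0 j hne h]
      · rw [hP1 i0 j hne h]
        apply mul_nonneg (hQ_nonneg i0 j)
        apply le_min zero_le_one
        apply div_nonneg
        · exact mul_nonneg (hpf_pos j).le (hQ_nonneg j i0)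
        · exact mul_nonneg (hpf_pos i0).le (hQ_nonneg i0 j)
  have hProw : ∀ i0, ∑ j, P i0 j = 1 := by
    intro i0
    rw [← Finset.sum_erase_add Finset.univ _ (Finset.mem_univ i0), hPdiag]
    ring
  have hP_lb : ∀ i j, W i j = 1 → f j ^ 2 / B ≤ P i j := by
    intro i0 j hW1
    have hne : j ≠ i0 := by
      intro h
      subst h
      rw [hWdiag j] at hW1
      norm_num at hW1
    have hW1' : W j i0 = 1 := by rw [hWsymm j i0]; exact hW1
    have hQij := hQ_lb i0 j hW1
    have hQji := hQ_lb j i0 hW1'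
    have hQijpos : 0 < Q' i0 j :=
      lt_of_lt_of_le (div_pos (pow_pos (hfpos j) 2) hBpos) hQij
    rw [hP1 i0 j hne hW1]
    have hsplit : Q' i0 j * min 1 (pf j * Q' j i0 / (pf i0 * Q' i0 j))
        = min (Q' i0 j) (pf j * Q' j i0 / pf i0) := by
      rw [mul_min_of_nonneg _ _ hQijpos.le, mul_one]
      congr 1
      field_simp [hQijpos.ne', (hpf_pos i0).ne']
    rw [hsplit]
    apply le_min hQij
    have hexp : pf j * Q' j i0 / pf i0 = f j ^ 2 * Q' j i0 / f i0 ^ 2 := by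
      rw [hpf, hpf]
      field_simp
    rw [hexp]
    have h1 : f j ^ 2 * (f i0 ^ 2 / B) ≤ f j ^ 2 * Q' j i0 :=
      mul_le_mul_of_nonneg_left hQji (sq_nonneg _)
    have h2 : f j ^ 2 * (f i0 ^ 2 / B) / f i0 ^ 2 = f j ^ 2 / B := by
      have hi0 : f i0 ^ 2 ≠ 0 := (pow_pos (hfpos i0) 2).ne'
      calc f j ^ 2 * (f i0 ^ 2 / B) / f i0 ^ 2
          = f j ^ 2 / B * (f i0 ^ 2 / f i0 ^ 2) := by ring
        _ = f j ^ 2 / B := by rw [div_self hi0, mul_one]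
    calc f j ^ 2 / B = f j ^ 2 * (f i0 ^ 2 / B) / f i0 ^ 2 := h2.symm
      _ ≤ f j ^ 2 * Q' j i0 / f i0 ^ 2 :=
          div_le_div_of_nonneg_right h1 (pow_pos (hfpos i0) 2).le
  -- partial sums of survival probabilities
  set S : ℕ → Fin n → ℝ := fun m i0 => ∑ t ∈ Finset.range m, survivalProb P A i0 t
    with hSdef
  have hsurv_nonneg : ∀ i0 t, 0 ≤ survivalProb P A i0 t := by
    intro i0 t
    apply Finset.sum_nonneg
    intro v _
    exact Finset.prod_nonneg fun l _ => hP_nonneg _ _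
  have hS_nonneg : ∀ m i0, 0 ≤ S m i0 :=
    fun m i0 => Finset.sum_nonneg fun t _ => hsurv_nonneg i0 t
  have hS_succ : ∀ m i0, S (m+1) i0 =
      if i0 ∈ A then 0 else 1 + ∑ j, P i0 j * S m j := by
    intro m i0
    simp only [hSdef]
    rw [Finset.sum_range_succ']
    rw [Finset.sum_congr rfl fun t _ => surv_succ P A i0 t, surv_zero]
    by_cases h : i0 ∈ A
    · simp [h]
    · simp only [if_neg h]
      rw [Finset.sum_comm]
      rw [Finset.sum_congr rfl fun j _ =>
        (Finset.mul_sum (Finset.range m) (fun t => survivalProb P A j t) (P i0 j)).symm]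
      rw [add_comm]
  have hS_A : ∀ m i0, i0 ∈ A → S m i0 = 0 := by
    intro m i0 h
    cases m with
    | zero => simp [hSdef]
    | succ m => rw [hS_succ m i0, if_pos h]
  -- the key bound
  set y : ℝ := B / a with hy
  have hynonneg : 0 ≤ y := div_nonneg hBpos.le hapos.le
  set K : ℝ := (∑ s ∈ Finset.range r, y ^ s) * B / fmax ^ 2 with hK
  have hA_jM : jM ∈ A := hjM
  have hmain : ∀ m i0, S m i0 ≤ K := by
    intro m i0
    obtain ⟨j0, _, hj0⟩ := Finset.exists_max_image (Finset.univ : Finset (Fin n))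
      (S m) ⟨i, Finset.mem_univ i⟩
    have hSle : S m i0 ≤ S m j0 := hj0 i0 (Finset.mem_univ i0)
    obtain ⟨v, hv0, hvlast, hvedge⟩ := hWconn j0 jM
    have hH_nonneg : 0 ≤ S m j0 := hS_nonneg m j0
    have hsum_y_nonneg : ∀ t : ℕ, 0 ≤ ∑ s ∈ Finset.range t, y ^ s :=
      fun t => Finset.sum_nonneg fun s _ => pow_nonneg hynonneg s
    have hEK : ∀ t : ℕ, t ≤ r →
        B / fmax ^ 2 * (∑ s ∈ Finset.range t, y ^ s) ≤ K := by
      intro t ht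
      have hsub : (∑ s ∈ Finset.range t, y ^ s) ≤ ∑ s ∈ Finset.range r, y ^ s :=
        Finset.sum_le_sum_of_subset_of_nonneg (Finset.range_subset_range.mpr ht)
          (fun s _ _ => pow_nonneg hynonneg s)
      rw [hK]
      calc B / fmax ^ 2 * (∑ s ∈ Finset.range t, y ^ s)
          = (∑ s ∈ Finset.range t, y ^ s) * B / fmax ^ 2 := by ring
        _ ≤ (∑ s ∈ Finset.range r, y ^ s) * B / fmax ^ 2 := by
            apply div_le_div_of_nonneg_right _ (pow_pos hfmaxpos 2).le
            exact mul_le_mul_of_nonneg_right hsub hBpos.le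
    have claim : ∀ t : ℕ, ∀ hlt : t < r + 1,
        S m j0 ≤ K ∨
        S m j0 - B / f (v ⟨t, hlt⟩) ^ 2 * (∑ s ∈ Finset.range t, y ^ s)
          ≤ S m (v ⟨t, hlt⟩) := by
      intro t
      induction t with
      | zero =>
        intro hlt
        right
        have h0 : (⟨0, hlt⟩ : Fin (r + 1)) = 0 := Fin.mk_zero
        rw [h0, hv0]
        simp
      | succ t ih =>
        intro hlt
        have htr : t < r := by omega
        have hlt' : t < r + 1 := by omega
        rcases ih hlt' with hdone | hS'
        · left; exact hdone
        · by_cases hvA : v ⟨t, hlt'⟩ ∈ A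
          · left
            have h0 : S m (v ⟨t, hlt'⟩) = 0 := hS_A m _ hvA
            have hf_eq : f (v ⟨t, hlt'⟩) = fmax := hvA
            rw [h0, hf_eq] at hS'
            have := hEK t (le_of_lt htr)
            linarith
          · right
            have hedge : W (v ⟨t, hlt'⟩) (v ⟨t + 1, hlt⟩) = 1 := hvedge ⟨t, htr⟩
            have hq := hP_lb _ _ hedge
            have hq_pos : 0 < P (v ⟨t, hlt'⟩) (v ⟨t + 1, hlt⟩) :=
              lt_of_lt_of_le (div_pos (pow_pos (hfpos _) 2) hBpos) hq
            have hq_le : P (v ⟨t, hlt'⟩) (v ⟨t + 1, hlt⟩) ≤ 1 := by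
              have h1 := hProw (v ⟨t, hlt'⟩)
              have h2 : P (v ⟨t, hlt'⟩) (v ⟨t + 1, hlt⟩) ≤ ∑ j, P (v ⟨t, hlt'⟩) j :=
                Finset.single_le_sum (fun j _ => hP_nonneg _ j) (Finset.mem_univ _)
              linarith
            have hrec : S (m + 1) (v ⟨t, hlt'⟩)
                = 1 + ∑ j, P (v ⟨t, hlt'⟩) j * S m j := by
              rw [hS_succ, if_neg hvA]
            have hmono : S m (v ⟨t, hlt'⟩) ≤ S (m + 1) (v ⟨t, hlt'⟩) := by
              simp only [hSdef]
              exact Finset.sum_le_sum_of_subset_of_nonneg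
                (Finset.range_subset_range.mpr (Nat.le_succ m))
                (fun s _ _ => hsurv_nonneg _ s)
            have hsplit : ∑ j, P (v ⟨t, hlt'⟩) j * S m j
                = P (v ⟨t, hlt'⟩) (v ⟨t + 1, hlt⟩) * S m (v ⟨t + 1, hlt⟩)
                  + ∑ j ∈ Finset.univ.erase (v ⟨t + 1, hlt⟩), P (v ⟨t, hlt'⟩) j * S m j := by
              rw [← Finset.sum_erase_add Finset.univ _ (Finset.mem_univ (v ⟨t + 1, hlt⟩))]
              ring
            have herase_sum : ∑ j ∈ Finset.univ.erase (v ⟨t + 1, hlt⟩), P (v ⟨t, hlt'⟩) j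
                = 1 - P (v ⟨t, hlt'⟩) (v ⟨t + 1, hlt⟩) := by
              have h1 := hProw (v ⟨t, hlt'⟩)
              have h2 := Finset.sum_erase_add Finset.univ (fun j => P (v ⟨t, hlt'⟩) j)
                (Finset.mem_univ (v ⟨t + 1, hlt⟩))
              linarith
            have hrest : ∑ j ∈ Finset.univ.erase (v ⟨t + 1, hlt⟩), P (v ⟨t, hlt'⟩) j * S m j
                ≤ (1 - P (v ⟨t, hlt'⟩) (v ⟨t + 1, hlt⟩)) * S m j0 := by
              rw [← herase_sum, Finset.sum_mul]
              apply Finset.sum_le_sum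
              intro j _
              exact mul_le_mul_of_nonneg_left (hj0 j (Finset.mem_univ j)) (hP_nonneg _ j)
            have hup : S m (v ⟨t, hlt'⟩)
                ≤ 1 + P (v ⟨t, hlt'⟩) (v ⟨t + 1, hlt⟩) * S m (v ⟨t + 1, hlt⟩)
                  + (1 - P (v ⟨t, hlt'⟩) (v ⟨t + 1, hlt⟩)) * S m j0 := by
              rw [hrec, hsplit] at hmono
              linarith
            have hkey : P (v ⟨t, hlt'⟩) (v ⟨t + 1, hlt⟩)
                  * (S m j0 - S m (v ⟨t + 1, hlt⟩))
                ≤ 1 + B / f (v ⟨t, hlt'⟩) ^ 2 * (∑ s ∈ Finset.range t, y ^ s) := by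
              have he1 : P (v ⟨t, hlt'⟩) (v ⟨t + 1, hlt⟩)
                    * (S m j0 - S m (v ⟨t + 1, hlt⟩))
                  = P (v ⟨t, hlt'⟩) (v ⟨t + 1, hlt⟩) * S m j0
                    - P (v ⟨t, hlt'⟩) (v ⟨t + 1, hlt⟩) * S m (v ⟨t + 1, hlt⟩) :=
                mul_sub _ _ _
              have he2 : (1 - P (v ⟨t, hlt'⟩) (v ⟨t + 1, hlt⟩)) * S m j0
                  = S m j0 - P (v ⟨t, hlt'⟩) (v ⟨t + 1, hlt⟩) * S m j0 := by ring
              rw [he2] at hup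
              rw [he1]
              linarith
            have hstep : S m j0
                - (1 + B / f (v ⟨t, hlt'⟩) ^ 2 * (∑ s ∈ Finset.range t, y ^ s))
                  / P (v ⟨t, hlt'⟩) (v ⟨t + 1, hlt⟩)
                ≤ S m (v ⟨t + 1, hlt⟩) := by
              have h1 : S m j0 - S m (v ⟨t + 1, hlt⟩)
                  ≤ (1 + B / f (v ⟨t, hlt'⟩) ^ 2 * (∑ s ∈ Finset.range t, y ^ s))
                    / P (v ⟨t, hlt'⟩) (v ⟨t + 1, hlt⟩) := by
                rw [le_div_iff₀ hq_pos]
                calc (S m j0 - S m (v ⟨t + 1, hlt⟩)) * P (v ⟨t, hlt'⟩) (v ⟨t + 1, hlt⟩)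
                    = P (v ⟨t, hlt'⟩) (v ⟨t + 1, hlt⟩)
                      * (S m j0 - S m (v ⟨t + 1, hlt⟩)) := by ring
                  _ ≤ _ := hkey
              linarith
            have hEt_nonneg : 0 ≤ B / f (v ⟨t, hlt'⟩) ^ 2 * (∑ s ∈ Finset.range t, y ^ s) :=
              mul_nonneg (div_nonneg hBpos.le (sq_nonneg _)) (hsum_y_nonneg t)
            have hinv : 1 / P (v ⟨t, hlt'⟩) (v ⟨t + 1, hlt⟩) ≤ B / f (v ⟨t + 1, hlt⟩) ^ 2 := by
              have h := one_div_le_one_div_of_le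
                (div_pos (pow_pos (hfpos (v ⟨t + 1, hlt⟩)) 2) hBpos) hq
              rw [one_div_div] at h
              exact h
            have h1q : (1 + B / f (v ⟨t, hlt'⟩) ^ 2 * (∑ s ∈ Finset.range t, y ^ s))
                  / P (v ⟨t, hlt'⟩) (v ⟨t + 1, hlt⟩)
                ≤ (1 + B / f (v ⟨t, hlt'⟩) ^ 2 * (∑ s ∈ Finset.range t, y ^ s))
                  * (B / f (v ⟨t + 1, hlt⟩) ^ 2) := by
              calc (1 + B / f (v ⟨t, hlt'⟩) ^ 2 * (∑ s ∈ Finset.range t, y ^ s))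
                    / P (v ⟨t, hlt'⟩) (v ⟨t + 1, hlt⟩)
                  = (1 + B / f (v ⟨t, hlt'⟩) ^ 2 * (∑ s ∈ Finset.range t, y ^ s))
                    * (1 / P (v ⟨t, hlt'⟩) (v ⟨t + 1, hlt⟩)) := by ring
                _ ≤ _ := mul_le_mul_of_nonneg_left hinv (by linarith)
            have hBf1 : B / f (v ⟨t, hlt'⟩) ^ 2 ≤ y := by
              rw [hy]
              exact div_le_div_of_nonneg_left hBpos.le hapos
                (by rw [ha]; exact pow_le_pow_left₀ hfminpos.le (hfmin_le _) 2)
            have hsum_succ : 1 + y * (∑ s ∈ Finset.range t, y ^ s)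
                = ∑ s ∈ Finset.range (t + 1), y ^ s := by
              rw [Finset.sum_range_succ']
              rw [Finset.sum_congr rfl fun s _ => pow_succ' y s]
              rw [← Finset.mul_sum]
              simp [add_comm]
            have hEnext : (1 + B / f (v ⟨t, hlt'⟩) ^ 2 * (∑ s ∈ Finset.range t, y ^ s))
                  * (B / f (v ⟨t + 1, hlt⟩) ^ 2)
                ≤ B / f (v ⟨t + 1, hlt⟩) ^ 2 * (∑ s ∈ Finset.range (t + 1), y ^ s) := by
              have hEt_le : B / f (v ⟨t, hlt'⟩) ^ 2 * (∑ s ∈ Finset.range t, y ^ s)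
                  ≤ y * (∑ s ∈ Finset.range t, y ^ s) :=
                mul_le_mul_of_nonneg_right hBf1 (hsum_y_nonneg t)
              have h2 : 1 + B / f (v ⟨t, hlt'⟩) ^ 2 * (∑ s ∈ Finset.range t, y ^ s)
                  ≤ ∑ s ∈ Finset.range (t + 1), y ^ s := by
                rw [← hsum_succ]
                linarith
              calc (1 + B / f (v ⟨t, hlt'⟩) ^ 2 * (∑ s ∈ Finset.range t, y ^ s))
                    * (B / f (v ⟨t + 1, hlt⟩) ^ 2)
                  ≤ (∑ s ∈ Finset.range (t + 1), y ^ s) * (B / f (v ⟨t + 1, hlt⟩) ^ 2) :=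
                    mul_le_mul_of_nonneg_right h2
                      (div_nonneg hBpos.le (sq_nonneg _))
                _ = B / f (v ⟨t + 1, hlt⟩) ^ 2 * (∑ s ∈ Finset.range (t + 1), y ^ s) := by
                    ring
            linarith
    rcases claim r (Nat.lt_succ_self r) with h | h
    · exact le_trans hSle h
    · have hlastv : v ⟨r, Nat.lt_succ_self r⟩ = jM := by
        rw [← hvlast]
        rfl
      have h0 : S m (v ⟨r, Nat.lt_succ_self r⟩) = 0 := by
        rw [hlastv]
        exact hS_A m jM hA_jM
      have hf_eq : f (v ⟨r, Nat.lt_succ_self r⟩) = fmax := by rw [hlastv, hjM]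
      rw [h0, hf_eq] at h
      have := hEK r le_rfl
      calc S m i0 ≤ S m j0 := hSle
        _ ≤ B / fmax ^ 2 * (∑ s ∈ Finset.range r, y ^ s) := by linarith
        _ ≤ K := hEK r le_rfl
  have hKRHS : K ≤ C ^ r / (fmax ^ 2 * fmin ^ (2 * (r - 1))) := by
    have hfa : fmin ^ (2 * (r - 1)) = a ^ (r - 1) := by rw [ha, ← pow_mul]
    have h1 : ∀ s ∈ Finset.range r,
        y ^ s * (B * a ^ (r - 1)) = B ^ (r - (r - 1 - s)) * a ^ (r - 1 - s) := by
      intro s hs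
      rw [Finset.mem_range] at hs
      have e1 : r - (r - 1 - s) = s + 1 := by omega
      have e2 : a ^ (r - 1) = a ^ s * a ^ (r - 1 - s) := by
        rw [← pow_add]
        congr 1
        omega
      rw [e1, e2, hy, div_pow, pow_succ]
      field_simp
    have h2 : (∑ s ∈ Finset.range r, y ^ s) * (B * a ^ (r - 1))
        = ∑ s ∈ Finset.range r, B ^ (r - (r - 1 - s)) * a ^ (r - 1 - s) := by
      rw [Finset.sum_mul]
      exact Finset.sum_congr rfl h1
    have h3 : ∑ s ∈ Finset.range r, B ^ (r - (r - 1 - s)) * a ^ (r - 1 - s)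
        = ∑ t ∈ Finset.range r, B ^ (r - t) * a ^ t :=
      Finset.sum_range_reflect (fun t => B ^ (r - t) * a ^ t) r
    have h4 := geom_aux B a C hBpos.le hapos.le hBC r
    have h5 : (∑ s ∈ Finset.range r, y ^ s) * B * a ^ (r - 1) ≤ C ^ r := by
      rw [mul_assoc, h2, h3]
      exact h4
    rw [hK, hfa]
    rw [div_le_div_iff₀ (pow_pos hfmaxpos 2) (mul_pos (pow_pos hfmaxpos 2) (pow_pos hapos (r-1)))]
    calc (∑ s ∈ Finset.range r, y ^ s) * B * (fmax ^ 2 * a ^ (r - 1))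
        = ((∑ s ∈ Finset.range r, y ^ s) * B * a ^ (r - 1)) * fmax ^ 2 := by ring
      _ ≤ C ^ r * fmax ^ 2 :=
          mul_le_mul_of_nonneg_right h5 (pow_pos hfmaxpos 2).le
  -- assembly
  rw [expectedHittingTime]
  rw [ENNReal.tsum_eq_iSup_sum]
  apply iSup_le
  intro s
  have hsub : s ⊆ Finset.range (s.sup id + 1) := fun t ht =>
    Finset.mem_range.mpr (Nat.lt_succ_of_le (Finset.le_sup (f := id) ht))
  calc ∑ t ∈ s, ENNReal.ofReal (survivalProb P A i t)
      ≤ ∑ t ∈ Finset.range (s.sup id + 1), ENNReal.ofReal (survivalProb P A i t) :=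
        Finset.sum_le_sum_of_subset hsub
    _ = ENNReal.ofReal (S (s.sup id + 1) i) := by
        rw [hSdef]
        exact (ENNReal.ofReal_sum_of_nonneg fun t _ => hsurv_nonneg i t).symm
    _ ≤ ENNReal.ofReal (C ^ r / (fmax ^ 2 * fmin ^ (2 * (r - 1)))) :=
        ENNReal.ofReal_le_ofReal (le_trans (hmain _ i) hKRHS)
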